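/- Let d ≥ 1, let 1 ≤ k ≤ d−1, and let V_1, …, V_n (n ≥ 2) be k-dimensional linear subspaces of ℝ^d with positive weights ω_1, …, ω_n. Then {(V_j, ω_j)}_{j=1}^n is an equiangular tight fusion frame (i.e. ⟨P_{V_i}, P_{V_j}⟩ takes the same value for all i ≠ j and Σ_{j=1}^n ω_j P_{V_j} is a positive multiple of the identity) if and only if all the weights ω_j are equal and ⟨P_{V_i}, P_{V_j}⟩ = k(nk−d)/((n−1)d) for all i ≠ j. -/

import Mathlib

open scoped BigOperators
open scoped RealInnerProductSpace

/-- The orthogonal projection onto a subspace `V` of `ℝ^d`, as a linear endomorphism. -/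
noncomputable def proj {d : ℕ} (V : Submodule ℝ (EuclideanSpace ℝ (Fin d))) :
    EuclideanSpace ℝ (Fin d) →ₗ[ℝ] EuclideanSpace ℝ (Fin d) :=
  V.subtype ∘ₗ (V.orthogonalProjectionOnto).toLinearMap

/-- `⟨P_V, P_W⟩ = trace (P_V P_W)`. -/
noncomputable def trPP {d : ℕ} (V W : Submodule ℝ (EuclideanSpace ℝ (Fin d))) : ℝ :=
  LinearMap.trace ℝ _ (proj V ∘ₗ proj W)

lemma trace_eq_sum_inner {E : Type*} [NormedAddCommGroup E] [InnerProductSpace ℝ E]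
    [FiniteDimensional ℝ E] {ι : Type*} [Fintype ι] [DecidableEq ι]
    (b : OrthonormalBasis ι ℝ E) (f : E →ₗ[ℝ] E) :
    LinearMap.trace ℝ E f = ∑ i, ⟪b i, f (b i)⟫ := by
  rw [LinearMap.trace_eq_matrix_trace ℝ b.toBasis, Matrix.trace]
  refine Finset.sum_congr rfl fun i _ => ?_
  rw [Matrix.diag_apply, LinearMap.toMatrix_apply, OrthonormalBasis.coe_toBasis,
    OrthonormalBasis.coe_toBasis_repr_apply, OrthonormalBasis.repr_apply_apply]

lemma symm_trace_sq_zero {E : Type*} [NormedAddCommGroup E] [InnerProductSpace ℝ E]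
    [FiniteDimensional ℝ E] (f : E →ₗ[ℝ] E)
    (hsym : ∀ x y, ⟪f x, y⟫ = ⟪x, f y⟫)
    (h : LinearMap.trace ℝ E (f * f) = 0) : f = 0 := by
  set b := stdOrthonormalBasis ℝ E
  have key : ∀ i, f (b i) = 0 := by
    have ht := trace_eq_sum_inner b (f * f)
    rw [h] at ht
    have h2 : ∀ i ∈ Finset.univ, (0:ℝ) ≤ ⟪b i, (f * f) (b i)⟫ := by
      intro i _
      rw [Module.End.mul_apply, ← hsym]
      exact real_inner_self_nonneg
    have hz := (Finset.sum_eq_zero_iff_of_nonneg h2).mp ht.symm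
    intro i
    have hi := hz i (Finset.mem_univ i)
    rw [Module.End.mul_apply, ← hsym] at hi
    exact inner_self_eq_zero.mp hi
  exact b.toBasis.ext fun i => by simpa using key i

lemma proj_symm {d : ℕ} (V : Submodule ℝ (EuclideanSpace ℝ (Fin d))) (x y) :
    ⟪proj V x, y⟫ = ⟪x, proj V y⟫ :=
  V.inner_starProjection_left_eq_right x y

lemma proj_idem {d : ℕ} (V : Submodule ℝ (EuclideanSpace ℝ (Fin d))) :
    proj V * proj V = proj V := by
  ext x
  simp [Module.End.mul_eq_comp, proj, Submodule.starProjection_eq_self_iff.mpr (V.starProjection_apply_mem x)]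

lemma proj_isProj {d : ℕ} (V : Submodule ℝ (EuclideanSpace ℝ (Fin d))) :
    LinearMap.IsProj V (proj V) := by
  constructor
  · exact fun x => (V.orthogonalProjectionOnto x).2
  · intro x hx
    show ((V.orthogonalProjectionOnto x : V) : EuclideanSpace ℝ (Fin d)) = x
    rw [Submodule.coe_orthogonalProjectionOnto_apply, Submodule.starProjection_eq_self_iff.mpr hx]

lemma trace_proj {d : ℕ} (V : Submodule ℝ (EuclideanSpace ℝ (Fin d))) :
    LinearMap.trace ℝ _ (proj V) = Module.finrank ℝ V :=
  (proj_isProj V).trace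

lemma trPP_eq {d : ℕ} (V W : Submodule ℝ (EuclideanSpace ℝ (Fin d))) :
    trPP V W = LinearMap.trace ℝ _ (proj V * proj W) := rfl

theorem stmt5 {d n k : ℕ} (hd : 1 ≤ d) (hk1 : 1 ≤ k) (hk2 : k ≤ d - 1) (hn : 2 ≤ n)
    (V : Fin n → Submodule ℝ (EuclideanSpace ℝ (Fin d)))
    (hVdim : ∀ j, Module.finrank ℝ (V j) = k)
    (ω : Fin n → ℝ) (hω : ∀ j, 0 < ω j) :
    ((∃ c : ℝ, ∀ i j, i ≠ j → trPP (V i) (V j) = c) ∧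
      ∃ A : ℝ, 0 < A ∧
        ∑ j, ω j • proj (V j) =
          A • (LinearMap.id : EuclideanSpace ℝ (Fin d) →ₗ[ℝ] EuclideanSpace ℝ (Fin d)))
    ↔
    ((∀ i j, ω i = ω j) ∧
      ∀ i j, i ≠ j →
        trPP (V i) (V j) = (k : ℝ) * ((n : ℝ) * k - d) / (((n : ℝ) - 1) * d)) := by
  set E := EuclideanSpace ℝ (Fin d)
  have hdR : (0:ℝ) < d := by exact_mod_cast hd
  have hkR : (0:ℝ) < k := by exact_mod_cast hk1
  have hkd : k < d := by omega
  have hn1 : (n:ℝ) - 1 ≠ 0 := by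
    have : (2:ℝ) ≤ n := by exact_mod_cast hn
    linarith
  have htrace_id : LinearMap.trace ℝ E LinearMap.id = (d : ℝ) := by
    rw [LinearMap.trace_id]
    norm_cast
    exact finrank_euclideanSpace_fin
  have htrP : ∀ j, LinearMap.trace ℝ E (proj (V j)) = (k : ℝ) := by
    intro j; rw [trace_proj, hVdim]
  have htrPP_self : ∀ j, LinearMap.trace ℝ E (proj (V j) * proj (V j)) = (k : ℝ) := by
    intro j; rw [proj_idem, htrP]
  have i0 : Fin n := ⟨0, by omega⟩
  constructor
  · rintro ⟨⟨c, hc⟩, A, hA, hsum⟩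
    set S := ∑ j, ω j with hSdef
    -- trace of the tightness identity
    have h1 : S * k = A * d := by
      have e := congrArg (LinearMap.trace ℝ E) hsum
      rw [map_sum, map_smul, htrace_id] at e
      simp_rw [map_smul, htrP, smul_eq_mul] at e
      rw [← Finset.sum_mul] at e
      exact e
    -- trace of P_i ∘ (tightness identity)
    have h2 : ∀ i, ω i * k + (S - ω i) * c = A * k := by
      intro i
      have e3 : proj (V i) * (∑ j, ω j • proj (V j)) =
          ∑ j, ω j • (proj (V i) * proj (V j)) := by
        rw [Finset.mul_sum]
        exact Finset.sum_congr rfl fun j _ => (mul_smul_comm _ _ _)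
      have e4 : proj (V i) * (A • (LinearMap.id : E →ₗ[ℝ] E)) = A • proj (V i) := by
        rw [mul_smul_comm, ← Module.End.one_eq_id, mul_one]
      have e := congrArg (fun g => LinearMap.trace ℝ E (proj (V i) * g)) hsum
      rw [e3, e4, map_sum, map_smul, htrP, smul_eq_mul] at e
      simp_rw [map_smul, smul_eq_mul] at e
      rw [← Finset.add_sum_erase _ _ (Finset.mem_univ i), htrPP_self] at e
      have erw : ∑ j ∈ Finset.univ.erase i, ω j * LinearMap.trace ℝ E (proj (V i) * proj (V j))
          = (S - ω i) * c := by
        rw [Finset.sum_congr rfl (fun j hj => by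
          rw [← trPP_eq, hc i j (Ne.symm (Finset.ne_of_mem_erase hj))]),
          ← Finset.sum_mul, Finset.sum_erase_eq_sub (Finset.mem_univ i)]
      rw [erw] at e
      exact e
    rcases eq_or_ne c k with hck | hck
    · exfalso
      have ha := h2 i0
      rw [hck] at ha
      have hAk : S = A := by
        have : S * (k:ℝ) = A * k := by ring_nf; ring_nf at ha; linarith
        exact mul_right_cancel₀ (ne_of_gt hkR) this
      rw [hAk] at h1
      have : (k:ℝ) = d := mul_left_cancel₀ (ne_of_gt hA) h1
      have : (k:ℝ) < d := by exact_mod_cast hkd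
      linarith
    · have hωeq : ∀ i j, ω i = ω j := by
        intro i j
        have hkc : (k:ℝ) - c ≠ 0 := sub_ne_zero.mpr (Ne.symm hck)
        have hz : (ω i - ω j) * ((k:ℝ) - c) = 0 := by
          linear_combination (h2 i) - (h2 j)
        have := (mul_eq_zero.mp hz).resolve_right hkc
        linarith [sub_eq_zero.mp this]
      refine ⟨hωeq, fun i j hij => ?_⟩
      rw [hc i j hij]
      set w := ω i0 with hwdef
      have hw : w ≠ 0 := ne_of_gt (hω i0)
      have hSw : S = n * w := by
        rw [hSdef, Finset.sum_congr rfl (fun j _ => hωeq j i0), Finset.sum_const,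
          Finset.card_univ, Fintype.card_fin, nsmul_eq_mul]
      have E1 := h2 i0
      rw [hSw] at E1 h1
      -- E1 : w * k + (n*w - w) * c = A * k ; h1 : n*w*k = A*d
      have key : w * (c * (((n:ℝ) - 1) * d) - k * ((n:ℝ) * k - d)) = 0 := by
        linear_combination (d:ℝ) * E1 - (k:ℝ) * h1
      have hz := (mul_eq_zero.mp key).resolve_left hw
      have hnd : ((n:ℝ) - 1) * d ≠ 0 := mul_ne_zero hn1 (ne_of_gt hdR)
      rw [eq_div_iff hnd]
      linarith [sub_eq_zero.mp (by linarith [hz] : c * (((n:ℝ) - 1) * d) - k * ((n:ℝ) * k - d) = 0)]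
  · rintro ⟨hωeq, hc⟩
    refine ⟨⟨_, hc⟩, ?_⟩
    set c₀ : ℝ := (k : ℝ) * ((n : ℝ) * k - d) / (((n : ℝ) - 1) * d) with hc₀
    set w := ω i0 with hwdef
    have hw : 0 < w := hω i0
    set r : ℝ := (n : ℝ) * k / d with hrdef
    set T : E →ₗ[ℝ] E := ∑ j, proj (V j) with hTdef
    have hTsym : ∀ x y, ⟪T x, y⟫ = ⟪x, T y⟫ := by
      intro x y
      rw [hTdef]
      simp only [LinearMap.sum_apply, sum_inner (𝕜 := ℝ) (E := EuclideanSpace ℝ (Fin d)),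
        inner_sum (𝕜 := ℝ) (E := EuclideanSpace ℝ (Fin d))]
      exact Finset.sum_congr rfl fun j _ => proj_symm (V j) x y
    have htrT : LinearMap.trace ℝ E T = (n:ℝ) * k := by
      rw [hTdef, map_sum]
      simp_rw [htrP]
      rw [Finset.sum_const, Finset.card_univ, Fintype.card_fin, nsmul_eq_mul]
    have htrTT : LinearMap.trace ℝ E (T * T) = (n:ℝ) * k + (n:ℝ) * (((n:ℝ) - 1) * c₀) := by
      rw [hTdef, Finset.sum_mul_sum, map_sum]
      have inner_sum : ∀ i, LinearMap.trace ℝ E (∑ j, proj (V i) * proj (V j)) =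
          (k:ℝ) + ((n:ℝ) - 1) * c₀ := by
        intro i
        rw [map_sum, ← Finset.add_sum_erase _ _ (Finset.mem_univ i), htrPP_self,
          Finset.sum_congr rfl (fun j hj => by
            rw [← trPP_eq, hc i j (Ne.symm (Finset.ne_of_mem_erase hj))]),
          Finset.sum_const, Finset.card_erase_of_mem (Finset.mem_univ i),
          Finset.card_univ, Fintype.card_fin, nsmul_eq_mul]
        congr 1
        push_cast [Nat.cast_sub (by omega : 1 ≤ n)]
        ring
      rw [Finset.sum_congr rfl (fun i _ => inner_sum i), Finset.sum_const,
        Finset.card_univ, Fintype.card_fin, nsmul_eq_mul]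
      ring
    set M : E →ₗ[ℝ] E := T - r • 1 with hMdef
    have hMsym : ∀ x y, ⟪M x, y⟫ = ⟪x, M y⟫ := by
      intro x y
      rw [hMdef]
      simp only [LinearMap.sub_apply, LinearMap.smul_apply, Module.End.one_apply,
        inner_sub_left, inner_sub_right, real_inner_smul_left, real_inner_smul_right,
        hTsym x y]
    have hMM : M * M = T * T - r • T - r • T + (r * r) • 1 := by
      rw [hMdef]
      simp only [mul_sub, sub_mul, mul_smul_comm, smul_mul_assoc, smul_smul, mul_one, one_mul, smul_sub]
      abel
    have htrM : LinearMap.trace ℝ E (M * M) = 0 := by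
      rw [hMM]
      have htr1 : LinearMap.trace ℝ E (1 : E →ₗ[ℝ] E) = (d:ℝ) := by
        rw [Module.End.one_eq_id]; exact htrace_id
      simp only [map_add, map_sub, map_smul, smul_eq_mul]
      rw [htrTT, htrT, htr1, hrdef, hc₀]
      field_simp
      ring
    have hM0 : M = 0 := symm_trace_sq_zero M hMsym htrM
    have hT : T = r • 1 := by
      rw [hMdef] at hM0
      exact sub_eq_zero.mp hM0
    refine ⟨w * r, by positivity, ?_⟩
    have : (∑ j, ω j • proj (V j)) = w • T := by
      rw [hTdef, Finset.smul_sum]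
      exact Finset.sum_congr rfl fun j _ => by rw [hωeq j i0]
    rw [this, hT, smul_smul, Module.End.one_eq_id]
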